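/- Let M be a nonempty finite subset of 𝓜_n and let G = (V,E) be a tree on 𝓜 connecting M with |G| ≤ smt(M,𝓜) + 1. For each edge e = vw ∈ E fix an optimal correspondence R_e ∈ 𝓡_opt(v,w), and for each vertex v ∈ V let v' ⊆ v be the set of all points of v that lie on some thread emitted from a point of the disjoint union m = ⊔_{u ∈ M} u. Let G' = (V',E') be the graph with V' = {v' : v ∈ V} and v'w' ∈ E' iff vw ∈ E. Then: for each edge e = vw ∈ E the restriction R_e|_{v'×w'} is a correspondence between v' and w' with dis(R_e|_{v'×w'}) ≤ dis R_e; consequently d_GH(v',w') ≤ d_GH(v,w) for each edge, |G'| ≤ |G|, G' connects M, |G'| ≤ smt(M,𝓜) + 1, and every vertex v' of G' has at most N points, where N is the total number of points of m. -/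

import Mathlib

/-- A (simple) graph on a set `X`: a finite vertex set `verts ⊆ X` together with a finite
set of edges, each edge being a 2-element subset of `verts`. -/
structure GraphOn (X : Type*) where
  verts : Finset X
  edges : Finset (Sym2 X)
  mem_verts_of_mem_edges : ∀ e ∈ edges, ∀ x ∈ e, x ∈ verts
  not_isDiag : ∀ e ∈ edges, ¬ e.IsDiag

/-- Two points are adjacent in `G` if they form an edge of `G`. -/
def GraphOn.Adj {X : Type*} (G : GraphOn X) (x y : X) : Prop := s(x, y) ∈ G.edges

/-- A graph on `X` is connected if its vertex set is nonempty and any two of its vertices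
are joined by a path of edges. -/
def GraphOn.IsConnected {X : Type*} (G : GraphOn X) : Prop :=
  G.verts.Nonempty ∧ ∀ x ∈ G.verts, ∀ y ∈ G.verts, Relation.ReflTransGen G.Adj x y

/-- A graph on `X` is acyclic if it contains no cycle, i.e. no injective circular sequence
of at least three vertices with consecutive members adjacent. -/
def GraphOn.IsAcyclic {X : Type*} (G : GraphOn X) : Prop :=
  ¬ ∃ (k : ℕ) (v : ZMod k → X), 3 ≤ k ∧ Function.Injective v ∧ ∀ i, G.Adj (v i) (v (i + 1))

/-- A tree on `X` is a connected acyclic graph on `X`. -/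
def GraphOn.IsTree {X : Type*} (G : GraphOn X) : Prop := G.IsConnected ∧ G.IsAcyclic

/-- The length of a graph on a metric space: the sum of the lengths (distances between
endpoints) of all its edges. -/
noncomputable def GraphOn.length {X : Type*} [MetricSpace X] (G : GraphOn X) : ℝ :=
  ∑ e ∈ G.edges, Sym2.lift ⟨fun x y => dist x y, fun _ _ => dist_comm _ _⟩ e

/-- A graph `G` on `X` connects a finite set `M ⊆ X` if `G` is connected and all points of `M`
are vertices of `G`. -/
def GraphOn.Connects {X : Type*} (G : GraphOn X) (M : Finset X) : Prop :=
  G.IsConnected ∧ ∀ m ∈ M, m ∈ G.verts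

/-- The length of a Steiner minimal tree on a finite subset `M` of a metric space `X`:
the infimum of lengths of connected graphs on `X` connecting `M`. -/
noncomputable def smt (X : Type*) [MetricSpace X] (M : Finset X) : ℝ :=
  sInf {l : ℝ | ∃ G : GraphOn X, G.Connects M ∧ l = G.length}

open GromovHausdorff

/-- A relation `σ ⊆ X × Y` is a correspondence if both canonical projections
of `σ` to `X` and to `Y` are surjective. -/
def IsCorrespondence {X Y : Type*} (σ : Set (X × Y)) : Prop :=
  (∀ x : X, ∃ y : Y, (x, y) ∈ σ) ∧ (∀ y : Y, ∃ x : X, (x, y) ∈ σ)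

/-- The distortion of a relation `σ ⊆ X × Y` between metric spaces:
`dis σ = sup{ ||xx'| − |yy'|| : (x,y), (x',y') ∈ σ }`. -/
noncomputable def dis {X Y : Type*} [MetricSpace X] [MetricSpace Y] (σ : Set (X × Y)) : ℝ :=
  sSup {d : ℝ | ∃ p ∈ σ, ∃ q ∈ σ, d = |dist p.1 q.1 - dist p.2 q.2|}

/-- Given a family of threads `p` (one thread emitted from each point `x` of each boundary
space `u ∈ M`), `threadSet M p v = v'` is the set of all points of the space `v` lying on
some of these threads. -/
def threadSet (M : Finset GHSpace)
    (p : ∀ u ∈ M, u.Rep → ∀ v : GHSpace, v.Rep) (v : GHSpace) : Set v.Rep :=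
  {y : v.Rep | ∃ u, ∃ hu : u ∈ M, ∃ x : u.Rep, p u hu x v = y}


open Metric in
private lemma disSet_bddAbove {X Y : Type*} [MetricSpace X] [CompactSpace X]
    [MetricSpace Y] [CompactSpace Y] (σ : Set (X × Y)) :
    BddAbove {d : ℝ | ∃ p ∈ σ, ∃ q ∈ σ, d = |dist p.1 q.1 - dist p.2 q.2|} := by
  refine ⟨Metric.diam (Set.univ : Set X) + Metric.diam (Set.univ : Set Y), ?_⟩
  rintro d ⟨p, hp, q, hq, rfl⟩
  have h1 : dist p.1 q.1 ≤ Metric.diam (Set.univ : Set X) :=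
    Metric.dist_le_diam_of_mem Metric.isBounded_of_compactSpace trivial trivial
  have h2 : dist p.2 q.2 ≤ Metric.diam (Set.univ : Set Y) :=
    Metric.dist_le_diam_of_mem Metric.isBounded_of_compactSpace trivial trivial
  have h3 := dist_nonneg (x := p.1) (y := q.1)
  have h4 := dist_nonneg (x := p.2) (y := q.2)
  rcases abs_cases (dist p.1 q.1 - dist p.2 q.2) with ⟨h, -⟩ | ⟨h, -⟩ <;> linarith

private lemma le_dis {X Y : Type*} [MetricSpace X] [CompactSpace X]
    [MetricSpace Y] [CompactSpace Y] (σ : Set (X × Y)) {a b : X × Y}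
    (ha : a ∈ σ) (hb : b ∈ σ) : |dist a.1 b.1 - dist a.2 b.2| ≤ dis σ :=
  le_csSup (disSet_bddAbove σ) ⟨a, ha, b, hb, rfl⟩

private lemma dis_nonneg' {X Y : Type*} [MetricSpace X] [CompactSpace X]
    [MetricSpace Y] [CompactSpace Y] {σ : Set (X × Y)} (h : σ.Nonempty) : 0 ≤ dis σ := by
  obtain ⟨a, ha⟩ := h
  have := le_dis σ ha ha
  simpa using this

private lemma dis_mono {X Y : Type*} [MetricSpace X] [CompactSpace X]
    [MetricSpace Y] [CompactSpace Y] {σ' σ : Set (X × Y)} (hsub : σ' ⊆ σ)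
    (hne : σ.Nonempty) : dis σ' ≤ dis σ := by
  rcases Set.eq_empty_or_nonempty
      {d : ℝ | ∃ p ∈ σ', ∃ q ∈ σ', d = |dist p.1 q.1 - dist p.2 q.2|} with he | hne'
  · unfold dis
    rw [he, Real.sSup_empty]
    exact dis_nonneg' hne
  · refine csSup_le_csSup (disSet_bddAbove σ) hne' ?_
    rintro d ⟨p, hp, q, hq, rfl⟩
    exact ⟨p, hsub hp, q, hsub hq, rfl⟩

open Metric in
private lemma ghDist_le_half_dis {X Y : Type*} [MetricSpace X] [CompactSpace X] [Nonempty X]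
    [MetricSpace Y] [CompactSpace Y] [Nonempty Y] (σ : Set (X × Y))
    (hc : IsCorrespondence σ) : GromovHausdorff.ghDist X Y ≤ dis σ / 2 := by
  have hne : σ.Nonempty := by
    obtain ⟨y, hy⟩ := hc.1 (Classical.arbitrary X)
    exact ⟨_, hy⟩
  haveI : Nonempty σ := hne.to_subtype
  have h0 : 0 ≤ dis σ := dis_nonneg' hne
  refine le_of_forall_pos_le_add fun δ hδ => ?_
  have ε0 : 0 < dis σ / 2 + δ := by linarith
  have H : ∀ z z' : σ, |dist (z : X × Y).1 (z' : X × Y).1 - dist (z : X × Y).2 (z' : X × Y).2|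
      ≤ 2 * (dis σ / 2 + δ) := fun z z' =>
    le_trans (le_dis σ z.2 z'.2) (by linarith)
  letI : MetricSpace (X ⊕ Y) :=
    glueMetricApprox (fun z : σ => (z : X × Y).1) (fun z : σ => (z : X × Y).2)
      (dis σ / 2 + δ) ε0 H
  have isomX : Isometry (Sum.inl : X → X ⊕ Y) := Isometry.of_dist_eq fun a b => rfl
  have isomY : Isometry (Sum.inr : Y → X ⊕ Y) := Isometry.of_dist_eq fun a b => rfl
  have key := GromovHausdorff.ghDist_le_hausdorffDist isomX isomY
  have hhd : hausdorffDist (Set.range (Sum.inl : X → X ⊕ Y))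
      (Set.range (Sum.inr : Y → X ⊕ Y)) ≤ dis σ / 2 + δ := by
    apply hausdorffDist_le_of_mem_dist ε0.le
    · rintro _ ⟨x, rfl⟩
      obtain ⟨y, hy⟩ := hc.1 x
      refine ⟨Sum.inr y, ⟨y, rfl⟩, le_of_eq ?_⟩
      exact glueDist_glued_points (fun z : σ => (z : X × Y).1) (fun z : σ => (z : X × Y).2)
        (dis σ / 2 + δ) ⟨(x, y), hy⟩
    · rintro _ ⟨y, rfl⟩
      obtain ⟨x, hx⟩ := hc.2 y
      refine ⟨Sum.inl x, ⟨x, rfl⟩, le_of_eq ?_⟩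
      rw [dist_comm]
      exact glueDist_glued_points (fun z : σ => (z : X × Y).1) (fun z : σ => (z : X × Y).2)
        (dis σ / 2 + δ) ⟨(x, y), hx⟩
  linarith [key.trans hhd]

/-- Let `M ⊆ 𝓜_n` be a nonempty finite set of (isometry classes of) finite metric spaces and
`G = (V,E)` a tree on `𝓜` connecting `M` with `|G| ≤ smt(M,𝓜) + 1`.  Fix an optimal
correspondence `R_e` for each edge `e = vw` of `G` and a thread emitted from each point `x`
of the disjoint union `m = ⊔_{u ∈ M} u`; for each vertex `v` let `v' ⊆ v` be the set of points
of `v` lying on one of these threads.  Then for each edge `vw` the restriction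
`R_e|_{v'×w'}` is a correspondence between `v'` and `w'` with `dis(R_e|_{v'×w'}) ≤ dis R_e`;
consequently (with `q v` denoting the isometry class of `v'`, so that `G' = (V',E')` is the
image of `G` under `v ↦ v' = q v`): `d_GH(v',w') ≤ d_GH(v,w)` for each edge, `|G'| ≤ |G|`,
`G'` connects `M` (indeed `u' = u` for every `u ∈ M`), `|G'| ≤ smt(M,𝓜) + 1`, and every
vertex `v'` of `G'` has at most `N` points, where `N` is the total number of points of `m`. -/
theorem thread_restriction_lemma (n N : ℕ)
    (M : Finset GHSpace) (hM : M.Nonempty)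
    (hfin : ∀ m ∈ M, Finite m.Rep ∧ Nat.card m.Rep ≤ n)
    (hN : N = ∑ m ∈ M, Nat.card m.Rep)
    (G : GraphOn GHSpace) (htree : G.IsTree) (hconn : G.Connects M)
    (hlen : G.length ≤ smt GHSpace M + 1)
    (R : ∀ v w : GHSpace, G.Adj v w → Set (v.Rep × w.Rep))
    (hRsymm : ∀ v w (h : G.Adj v w) (h' : G.Adj w v) (x : v.Rep) (y : w.Rep),
      (x, y) ∈ R v w h ↔ (y, x) ∈ R w v h')
    (hRcorr : ∀ v w (h : G.Adj v w), IsCorrespondence (R v w h))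
    (hRopt : ∀ v w (h : G.Adj v w), ghDist v.Rep w.Rep = (1 / 2) * dis (R v w h))
    (p : ∀ u ∈ M, u.Rep → ∀ v : GHSpace, v.Rep)
    (hp_emit : ∀ u (hu : u ∈ M) (x : u.Rep), p u hu x u = x)
    (hp_thread : ∀ u (hu : u ∈ M) (x : u.Rep) v w (h : G.Adj v w),
      (p u hu x v, p u hu x w) ∈ R v w h) :
    (∀ v w (h : G.Adj v w),
      (∀ a ∈ threadSet M p v, ∃ b ∈ threadSet M p w, (a, b) ∈ R v w h) ∧
      (∀ b ∈ threadSet M p w, ∃ a ∈ threadSet M p v, (a, b) ∈ R v w h) ∧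
      dis (R v w h ∩ (threadSet M p v) ×ˢ (threadSet M p w)) ≤ dis (R v w h)) ∧
    ∃ q : GHSpace → GHSpace,
      (∀ v ∈ G.verts, Nonempty ((threadSet M p v) ≃ᵢ (q v).Rep)) ∧
      (∀ v w (h : G.Adj v w), ghDist (q v).Rep (q w).Rep ≤ ghDist v.Rep w.Rep) ∧
      (∑ e ∈ G.edges,
          Sym2.lift ⟨fun a b => dist (q a) (q b), fun _ _ => dist_comm _ _⟩ e) ≤ G.length ∧
      (∑ e ∈ G.edges,
          Sym2.lift ⟨fun a b => dist (q a) (q b), fun _ _ => dist_comm _ _⟩ e) ≤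
        smt GHSpace M + 1 ∧
      (∀ u ∈ M, q u = u) ∧
      (∀ v ∈ G.verts, Finite (q v).Rep ∧ Nat.card (q v).Rep ≤ N) := by
  classical
  have hTne : ∀ v : GHSpace, (threadSet M p v).Nonempty := by
    intro v
    obtain ⟨u, hu⟩ := hM
    exact ⟨p u hu (Classical.arbitrary u.Rep) v, ⟨u, hu, Classical.arbitrary u.Rep, rfl⟩⟩
  haveI hMFin : ∀ u : {x // x ∈ M}, Finite (u : GHSpace).Rep := fun u => (hfin u.1 u.2).1
  have hTrange : ∀ v : GHSpace, threadSet M p v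
      = Set.range (fun z : Σ u : {x // x ∈ M}, (u : GHSpace).Rep => p z.1.1 z.1.2 z.2 v) := by
    intro v
    ext y
    constructor
    · rintro ⟨u, hu, x, rfl⟩
      exact ⟨⟨⟨u, hu⟩, x⟩, rfl⟩
    · rintro ⟨⟨⟨u, hu⟩, x⟩, rfl⟩
      exact ⟨u, hu, x, rfl⟩
  haveI hTfin : ∀ v : GHSpace, Finite (threadSet M p v) := by
    intro v
    rw [hTrange v]
    exact (Set.finite_range _).to_subtype
  haveI hTnonempty : ∀ v : GHSpace, Nonempty (threadSet M p v) := fun v => (hTne v).to_subtype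
  have hTcard : ∀ v : GHSpace, Nat.card (threadSet M p v) ≤ N := by
    intro v
    have h1 : Nat.card (threadSet M p v)
        ≤ Nat.card (Σ u : {x // x ∈ M}, (u : GHSpace).Rep) := by
      rw [hTrange v]
      exact Nat.card_le_card_of_surjective _ Set.rangeFactorization_surjective
    have h2 : Nat.card (Σ u : {x // x ∈ M}, (u : GHSpace).Rep) = N := by
      haveI : ∀ u : {x // x ∈ M}, Fintype (u : GHSpace).Rep := fun u => Fintype.ofFinite _
      calc Nat.card (Σ u : {x // x ∈ M}, (u : GHSpace).Rep)
          = ∑ u : {x // x ∈ M}, Nat.card (u : GHSpace).Rep := by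
            simp [Nat.card_eq_fintype_card, Fintype.card_sigma]
        _ = ∑ m ∈ M, Nat.card m.Rep := Finset.sum_coe_sort M (fun m => Nat.card m.Rep)
        _ = N := hN.symm
    omega
  have part1 : ∀ v w (h : G.Adj v w),
      (∀ a ∈ threadSet M p v, ∃ b ∈ threadSet M p w, (a, b) ∈ R v w h) ∧
      (∀ b ∈ threadSet M p w, ∃ a ∈ threadSet M p v, (a, b) ∈ R v w h) ∧
      dis (R v w h ∩ (threadSet M p v) ×ˢ (threadSet M p w)) ≤ dis (R v w h) := by
    intro v w h
    have hRne : (R v w h).Nonempty := by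
      obtain ⟨y, hy⟩ := (hRcorr v w h).1 (Classical.arbitrary v.Rep)
      exact ⟨_, hy⟩
    refine ⟨?_, ?_, dis_mono Set.inter_subset_left hRne⟩
    · rintro a ⟨u, hu, x, rfl⟩
      exact ⟨p u hu x w, ⟨u, hu, x, rfl⟩, hp_thread u hu x v w h⟩
    · rintro b ⟨u, hu, x, rfl⟩
      exact ⟨p u hu x v, ⟨u, hu, x, rfl⟩, hp_thread u hu x v w h⟩
  have hgh : ∀ v w (h : G.Adj v w),
      ghDist (GromovHausdorff.toGHSpace (threadSet M p v)).Rep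
        (GromovHausdorff.toGHSpace (threadSet M p w)).Rep ≤ ghDist v.Rep w.Rep := by
    intro v w h
    have hRne : (R v w h).Nonempty := by
      obtain ⟨y, hy⟩ := (hRcorr v w h).1 (Classical.arbitrary v.Rep)
      exact ⟨_, hy⟩
    set σ : Set ((threadSet M p v) × (threadSet M p w)) :=
      {z | ((z.1 : v.Rep), (z.2 : w.Rep)) ∈ R v w h} with hσdef
    have hcorr : IsCorrespondence σ := by
      constructor
      · rintro ⟨a, ha⟩
        obtain ⟨b, hb, hab⟩ := (part1 v w h).1 a ha
        exact ⟨⟨b, hb⟩, hab⟩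
      · rintro ⟨b, hb⟩
        obtain ⟨a, ha, hab⟩ := (part1 v w h).2.1 b hb
        exact ⟨⟨a, ha⟩, hab⟩
    have hdis : dis σ ≤ dis (R v w h) := by
      rcases Set.eq_empty_or_nonempty
          {d : ℝ | ∃ p' ∈ σ, ∃ q' ∈ σ, d = |dist p'.1 q'.1 - dist p'.2 q'.2|} with he | hne'
      · unfold dis
        rw [he, Real.sSup_empty]
        exact dis_nonneg' hRne
      · refine csSup_le_csSup (disSet_bddAbove _) hne' ?_
        rintro d ⟨p', hp', q', hq', rfl⟩
        refine ⟨((p'.1 : v.Rep), (p'.2 : w.Rep)), hp',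
          ((q'.1 : v.Rep), (q'.2 : w.Rep)), hq', ?_⟩
        rw [Subtype.dist_eq p'.1 q'.1, Subtype.dist_eq p'.2 q'.2]
    have h1 : ghDist (threadSet M p v) (threadSet M p w) ≤ dis σ / 2 :=
      ghDist_le_half_dis σ hcorr
    have h2 : ghDist (GromovHausdorff.toGHSpace (threadSet M p v)).Rep
        (GromovHausdorff.toGHSpace (threadSet M p w)).Rep
        = ghDist (threadSet M p v) (threadSet M p w) := by
      simp only [ghDist]
      rw [GHSpace.toGHSpace_rep, GHSpace.toGHSpace_rep]
    rw [h2, hRopt v w h]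
    linarith
  have hedge : ∀ e ∈ G.edges,
      Sym2.lift ⟨fun a b => dist (GromovHausdorff.toGHSpace (threadSet M p a))
          (GromovHausdorff.toGHSpace (threadSet M p b)), fun _ _ => dist_comm _ _⟩ e
        ≤ Sym2.lift ⟨fun x y => dist x y, fun _ _ => dist_comm _ _⟩ e := by
    intro e
    induction e using Sym2.ind with
    | _ a b =>
      intro he
      rw [Sym2.lift_mk, Sym2.lift_mk]
      dsimp only
      have hadj : G.Adj a b := he
      have h1 := hgh a b hadj
      rw [dist_ghDist, dist_ghDist]
      exact h1
  have hsumle : (∑ e ∈ G.edges,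
      Sym2.lift ⟨fun a b => dist (GromovHausdorff.toGHSpace (threadSet M p a))
          (GromovHausdorff.toGHSpace (threadSet M p b)), fun _ _ => dist_comm _ _⟩ e)
        ≤ G.length := by
    rw [GraphOn.length]
    exact Finset.sum_le_sum hedge
  have hqiso : ∀ v : GHSpace,
      Nonempty ((threadSet M p v) ≃ᵢ (GromovHausdorff.toGHSpace (threadSet M p v)).Rep) :=
    fun v => toGHSpace_eq_toGHSpace_iff_isometryEquiv.1 (GHSpace.toGHSpace_rep _).symm
  have hqM : ∀ u ∈ M, GromovHausdorff.toGHSpace (threadSet M p u) = u := by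
    intro u hu
    have hall : ∀ x : u.Rep, x ∈ threadSet M p u := fun x => ⟨u, hu, x, hp_emit u hu x⟩
    have iso : (threadSet M p u) ≃ᵢ u.Rep :=
      { toEquiv := ⟨Subtype.val, fun x => ⟨x, hall x⟩, fun _ => rfl, fun _ => rfl⟩
        isometry_toFun := isometry_subtype_coe }
    conv_rhs => rw [← GHSpace.toGHSpace_rep u]
    exact toGHSpace_eq_toGHSpace_iff_isometryEquiv.2 ⟨iso⟩
  refine ⟨part1, fun v => GromovHausdorff.toGHSpace (threadSet M p v),
    fun v _ => hqiso v, hgh, hsumle, hsumle.trans hlen, hqM, ?_⟩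
  intro v _
  obtain ⟨e⟩ := hqiso v
  constructor
  · exact Finite.of_equiv _ e.toEquiv
  · rw [← Nat.card_congr e.toEquiv]
    exact hTcard v
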